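/- arXiv:1703.02775 — 3 statements merged into one kernel-verified Lean document; each statement's English description precedes it below -/
import Mathlib

section
/- Let E ⊂ ℝ^n be measurable and θ > 0, and suppose that for every dyadic cube C at scale d intersecting E, the concentric tripled cube 3C satisfies ℒ^n(3C ∩ E) > θ · ℒ^n(3C). If E has finite measure, then ℒ^n(C_d^E) ≤ (1/θ) · ℒ^n(E). -/
open MeasureTheory Metric Set

noncomputable def dyadicCube (n d : ℕ) (m : Fin n → ℤ) : Set (EuclideanSpace ℝ (Fin n)) :=
  {x | ∀ j, (m j : ℝ) * (2 : ℝ) ^ (-(d : ℤ)) ≤ x j ∧ x j ≤ ((m j : ℝ) + 1) * (2 : ℝ) ^ (-(d : ℤ))}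

noncomputable def cubicalCover (n d : ℕ) (E : Set (EuclideanSpace ℝ (Fin n))) :
    Set (EuclideanSpace ℝ (Fin n)) :=
  ⋃ m ∈ {m : Fin n → ℤ | (dyadicCube n d m ∩ E).Nonempty}, dyadicCube n d m

noncomputable def tripledCube (n d : ℕ) (m : Fin n → ℤ) : Set (EuclideanSpace ℝ (Fin n)) :=
  {x | ∀ j, ((m j : ℝ) - 1) * (2 : ℝ) ^ (-(d : ℤ)) ≤ x j ∧ x j ≤ ((m j : ℝ) + 2) * (2 : ℝ) ^ (-(d : ℤ))}

section Aux

lemma dyadicCube_eq_preimage (n d : ℕ) (m : Fin n → ℤ) :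
    dyadicCube n d m = (MeasurableEquiv.toLp 2 (Fin n → ℝ)).symm ⁻¹'
      (univ.pi fun j => Icc ((m j : ℝ) * (2 : ℝ) ^ (-(d : ℤ)))
        (((m j : ℝ) + 1) * (2 : ℝ) ^ (-(d : ℤ)))) := by
  ext x
  simp [dyadicCube, MeasurableEquiv.coe_toLp_symm, Set.mem_pi, forall_and, Pi.le_def,
    MeasurableEquiv.toLp_symm_apply]

lemma tripledCube_eq_preimage (n d : ℕ) (m : Fin n → ℤ) :
    tripledCube n d m = (MeasurableEquiv.toLp 2 (Fin n → ℝ)).symm ⁻¹'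
      (univ.pi fun j => Icc (((m j : ℝ) - 1) * (2 : ℝ) ^ (-(d : ℤ)))
        (((m j : ℝ) + 2) * (2 : ℝ) ^ (-(d : ℤ)))) := by
  ext x
  simp [tripledCube, MeasurableEquiv.coe_toLp_symm, Set.mem_pi, forall_and, Pi.le_def,
    MeasurableEquiv.toLp_symm_apply]

lemma volume_dyadicCube (n d : ℕ) (m : Fin n → ℤ) :
    volume (dyadicCube n d m) = ENNReal.ofReal ((2 : ℝ) ^ (-(d : ℤ))) ^ n := by
  rw [dyadicCube_eq_preimage,
    (EuclideanSpace.volume_preserving_symm_measurableEquiv_toLp (Fin n)).measure_preimage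
      ((MeasurableSet.univ_pi fun j => measurableSet_Icc).nullMeasurableSet),
    volume_pi_pi]
  have key : ∀ j : Fin n, ((m j : ℝ) + 1) * (2 : ℝ) ^ (-(d : ℤ))
      - (m j : ℝ) * (2 : ℝ) ^ (-(d : ℤ)) = (2 : ℝ) ^ (-(d : ℤ)) := fun j => by ring
  simp only [Real.volume_Icc, key]
  rw [Finset.prod_const, Finset.card_univ, Fintype.card_fin]

lemma volume_tripledCube (n d : ℕ) (m : Fin n → ℤ) :
    volume (tripledCube n d m) = ENNReal.ofReal (3 * (2 : ℝ) ^ (-(d : ℤ))) ^ n := by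
  rw [tripledCube_eq_preimage,
    (EuclideanSpace.volume_preserving_symm_measurableEquiv_toLp (Fin n)).measure_preimage
      ((MeasurableSet.univ_pi fun j => measurableSet_Icc).nullMeasurableSet),
    volume_pi_pi]
  have key : ∀ j : Fin n, ((m j : ℝ) + 2) * (2 : ℝ) ^ (-(d : ℤ))
      - ((m j : ℝ) - 1) * (2 : ℝ) ^ (-(d : ℤ)) = 3 * (2 : ℝ) ^ (-(d : ℤ)) := fun j => by ring
  simp only [Real.volume_Icc, key]
  rw [Finset.prod_const, Finset.card_univ, Fintype.card_fin]

lemma measurableSet_tripledCube (n d : ℕ) (m : Fin n → ℤ) :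
    MeasurableSet (tripledCube n d m) := by
  rw [tripledCube_eq_preimage]
  exact (MeasurableSet.univ_pi fun j => measurableSet_Icc).preimage
    (MeasurableEquiv.toLp 2 (Fin n → ℝ)).symm.measurable

lemma volume_slab (n : ℕ) (j : Fin n) (s : Set ℝ) (hs : volume s = 0) :
    volume {x : EuclideanSpace ℝ (Fin n) | x j ∈ s} = 0 := by
  have h0 : volume (Function.eval j ⁻¹' s : Set (Fin n → ℝ)) = 0 := by
    rw [volume_pi]
    exact Measure.pi_eval_preimage_null _ hs
  have h1 : {x : EuclideanSpace ℝ (Fin n) | x j ∈ s} =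
      (MeasurableEquiv.toLp 2 (Fin n → ℝ)).symm ⁻¹' (Function.eval j ⁻¹' s) := rfl
  rw [h1, (EuclideanSpace.volume_preserving_symm_measurableEquiv_toLp (Fin n)).measure_preimage
    (NullMeasurableSet.of_null h0)]
  exact h0

lemma tripled_inter_null (n d : ℕ) (m m' : Fin n → ℤ) (j : Fin n)
    (hj : m j + 3 ≤ m' j) :
    volume (tripledCube n d m ∩ tripledCube n d m') = 0 := by
  have hpos : (0 : ℝ) < (2 : ℝ) ^ (-(d : ℤ)) := by positivity
  have hsub : tripledCube n d m ∩ tripledCube n d m' ⊆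
      {x : EuclideanSpace ℝ (Fin n) | x j ∈
        Icc (((m' j : ℝ) - 1) * (2 : ℝ) ^ (-(d : ℤ)))
          (((m j : ℝ) + 2) * (2 : ℝ) ^ (-(d : ℤ)))} := by
    rintro x ⟨hx, hx'⟩
    exact ⟨(hx' j).1, (hx j).2⟩
  refine measure_mono_null hsub (volume_slab n j _ ?_)
  rw [Real.volume_Icc]
  apply ENNReal.ofReal_eq_zero.2
  have hle : (m j : ℝ) + 3 ≤ (m' j : ℝ) := by exact_mod_cast hj
  nlinarith

end Aux

theorem stmt_4 (n d : ℕ) (E : Set (EuclideanSpace ℝ (Fin n)))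
    (hE : MeasurableSet E) (hfin : volume E < ⊤) (θ : ℝ) (hθ : 0 < θ)
    (h : ∀ m : Fin n → ℤ, (dyadicCube n d m ∩ E).Nonempty →
      ENNReal.ofReal θ * volume (tripledCube n d m) < volume (tripledCube n d m ∩ E)) :
    volume (cubicalCover n d E) ≤ ENNReal.ofReal (1 / θ) * volume E := by
  classical
  set K : ENNReal := 3 ^ n with hK
  have hK0 : K ≠ 0 := by simp [hK]
  have hKtop : K ≠ ⊤ := by simp [hK]
  have hθ0 : ENNReal.ofReal θ ≠ 0 := by
    simp only [ne_eq, ENNReal.ofReal_eq_zero, not_le]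
    exact hθ
  set T : (Fin n → ℤ) → ENNReal := fun m => volume (tripledCube n d m ∩ E) with hT
  set S : Set (Fin n → ℤ) := {m | (dyadicCube n d m ∩ E).Nonempty} with hS
  -- tripled volume as K times dyadic volume
  have h2 : ∀ m : Fin n → ℤ, volume (tripledCube n d m) = K * volume (dyadicCube n d m) := by
    intro m
    rw [volume_dyadicCube, volume_tripledCube, ENNReal.ofReal_mul (by norm_num : (0:ℝ) ≤ 3),
      mul_pow, hK]
    norm_num
  -- pointwise estimate
  have hpt : ∀ m ∈ S, volume (dyadicCube n d m) ≤ (ENNReal.ofReal θ * K)⁻¹ * T m := by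
    intro m hm
    have h1 := (h m hm).le
    have hmul : volume (dyadicCube n d m) * (ENNReal.ofReal θ * K) ≤ T m := by
      calc volume (dyadicCube n d m) * (ENNReal.ofReal θ * K)
          = ENNReal.ofReal θ * (K * volume (dyadicCube n d m)) := by ring
        _ = ENNReal.ofReal θ * volume (tripledCube n d m) := by rw [← h2]
        _ ≤ T m := h1
    have hb0 : ENNReal.ofReal θ * K ≠ 0 := by
      simp [hθ0, hK0]
    have hbt : ENNReal.ofReal θ * K ≠ ⊤ := ENNReal.mul_ne_top ENNReal.ofReal_ne_top hKtop
    calc volume (dyadicCube n d m) ≤ T m / (ENNReal.ofReal θ * K) :=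
          (ENNReal.le_div_iff_mul_le (Or.inl hb0) (Or.inl hbt)).2 hmul
      _ = (ENNReal.ofReal θ * K)⁻¹ * T m := by rw [ENNReal.div_eq_inv_mul]
  -- residue map
  set ρ : (Fin n → ℤ) → (Fin n → ZMod 3) := fun m j => (m j : ZMod 3) with hρ
  -- per-fiber bound
  have hfiber : ∀ r : Fin n → ZMod 3, ∑' mm : {m // ρ m = r}, T mm.1 ≤ volume E := by
    intro r
    have hdisj : Pairwise (Function.onFun (AEDisjoint volume)
        fun mm : {m // ρ m = r} => tripledCube n d mm.1 ∩ E) := by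
      intro a b hab
      have hne : a.1 ≠ b.1 := fun e => hab (Subtype.ext e)
      obtain ⟨j, hj⟩ := Function.ne_iff.1 hne
      have hmod : ((a.1 j : ZMod 3)) = (b.1 j : ZMod 3) := by
        have hre : ρ a.1 = ρ b.1 := a.2.trans b.2.symm
        exact congrFun hre j
      have hdvd : (3 : ℤ) ∣ (b.1 j - a.1 j) := by
        have := (ZMod.intCast_eq_intCast_iff _ _ 3).1 hmod
        exact Int.ModEq.dvd this
      have h3 : a.1 j + 3 ≤ b.1 j ∨ b.1 j + 3 ≤ a.1 j := by
        obtain ⟨k, hk⟩ := hdvd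
        have hkne : k ≠ 0 := by
          rintro rfl
          apply hj
          omega
        rcases lt_or_gt_of_ne hkne with hk' | hk' <;> [right; left] <;> omega
      have hnull : volume ((tripledCube n d a.1 ∩ E) ∩ (tripledCube n d b.1 ∩ E)) = 0 := by
        have hsub : (tripledCube n d a.1 ∩ E) ∩ (tripledCube n d b.1 ∩ E) ⊆
            tripledCube n d a.1 ∩ tripledCube n d b.1 := by
          rintro x ⟨⟨h1, _⟩, ⟨h2, _⟩⟩
          exact ⟨h1, h2⟩
        rcases h3 with h3 | h3
        · exact measure_mono_null hsub (tripled_inter_null n d _ _ j h3)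
        · rw [show tripledCube n d a.1 ∩ tripledCube n d b.1 =
              tripledCube n d b.1 ∩ tripledCube n d a.1 from inter_comm _ _] at hsub
          exact measure_mono_null hsub (tripled_inter_null n d _ _ j h3)
      exact hnull
    have hmeas : ∀ mm : {m // ρ m = r},
        NullMeasurableSet (tripledCube n d mm.1 ∩ E) volume :=
      fun mm => ((measurableSet_tripledCube n d mm.1).inter hE).nullMeasurableSet
    calc ∑' mm : {m // ρ m = r}, T mm.1
        = volume (⋃ mm : {m // ρ m = r}, tripledCube n d mm.1 ∩ E) :=
          (measure_iUnion₀ hdisj hmeas).symm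
      _ ≤ volume E := measure_mono (iUnion_subset fun mm => inter_subset_right)
  -- total sum over all cubes
  have hsumall : ∑' m : Fin n → ℤ, T m ≤ K * volume E := by
    rw [← (Equiv.sigmaFiberEquiv ρ).tsum_eq T, ENNReal.tsum_sigma']
    calc ∑' (r : Fin n → ZMod 3) (mm : {m // ρ m = r}), T mm.1
        ≤ ∑' _ : Fin n → ZMod 3, volume E := ENNReal.tsum_le_tsum hfiber
      _ = K * volume E := by
          rw [tsum_fintype, Finset.sum_const, Finset.card_univ, Fintype.card_fun,
            Fintype.card_fin, ZMod.card, nsmul_eq_mul, hK]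
          norm_num
  have hcount : S.Countable := S.to_countable
  have hb0 : ENNReal.ofReal θ * K ≠ 0 := by simp [hθ0, hK0]
  calc volume (cubicalCover n d E)
      ≤ ∑' m : S, volume (dyadicCube n d m.1) := measure_biUnion_le volume hcount _
    _ ≤ ∑' m : S, (ENNReal.ofReal θ * K)⁻¹ * T m.1 :=
        ENNReal.tsum_le_tsum fun m => hpt m.1 m.2
    _ = (ENNReal.ofReal θ * K)⁻¹ * ∑' m : S, T m.1 := ENNReal.tsum_mul_left
    _ ≤ (ENNReal.ofReal θ * K)⁻¹ * (K * volume E) := by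
        gcongr
        calc ∑' m : S, T m.1 ≤ ∑' m : Fin n → ℤ, T m :=
              ENNReal.tsum_comp_le_tsum_of_injective Subtype.val_injective T
          _ ≤ K * volume E := hsumall
    _ = ENNReal.ofReal (1 / θ) * volume E := by
        rw [ENNReal.mul_inv (Or.inl hθ0) (Or.inl ENNReal.ofReal_ne_top),
          one_div, ENNReal.ofReal_inv_of_pos hθ, mul_assoc, ← mul_assoc K⁻¹ K,
          ENNReal.inv_mul_cancel hK0 hKtop, one_mul]
end

section
/- Let E ⊂ ℝ^n be a closed set with reach(E) ≥ R > 0. Then for every 0 < r < R and every x with dist(x,E) ≤ r, there is a unique closest point π(x) ∈ E, and the nearest-point projection π is Lipschitz on E_r = {x : dist(x,E) ≤ r} with Lipschitz constant R/(R − r). -/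
open MeasureTheory Metric Set Filter Topology
open scoped RealInnerProductSpace

variable {H : Type*} [NormedAddCommGroup H] [InnerProductSpace ℝ H] [ProperSpace H]

lemma aux_cont {E : Set H} (hcl : IsClosed E) {R : ℝ}
    (hreach : ∀ x : H, Metric.infDist x E < R →
      ∃! y, y ∈ E ∧ dist x y = Metric.infDist x E)
    {γ : H} (hγ : Metric.infDist γ E < R) {a : H} (ha : a ∈ E)
    (haD : dist γ a = Metric.infDist γ E) {θ : ℝ} (hθ : 0 < θ) :
    ∃ ε > 0, ∀ y q : H, dist y γ < ε → q ∈ E → dist y q = Metric.infDist y E →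
      dist q a < θ := by
  by_contra hcon
  push_neg at hcon
  have hseq : ∀ k : ℕ, ∃ y q : H, dist y γ < 1/(k+1) ∧ q ∈ E ∧
      dist y q = Metric.infDist y E ∧ θ ≤ dist q a := by
    intro k
    obtain ⟨y, q, h1, h2, h3, h4⟩ := hcon (1/(k+1)) (by positivity)
    exact ⟨y, q, h1, h2, h3, h4⟩
  choose y q h1 h2 h3 h4 using hseq
  have hyγ : Tendsto y atTop (𝓝 γ) := by
    rw [tendsto_iff_dist_tendsto_zero]
    exact squeeze_zero (fun k => dist_nonneg) (fun k => (h1 k).le)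
      tendsto_one_div_add_atTop_nhds_zero_nat
  set M := Metric.infDist γ E + 2 with hM
  have hball : ∀ k, q k ∈ closedBall γ M ∩ E := by
    intro k
    refine ⟨mem_closedBall.2 ?_, h2 k⟩
    have l1 : dist (q k) γ ≤ dist (y k) (q k) + dist (y k) γ := by
      rw [dist_comm (y k) (q k)]; exact dist_triangle _ _ _
    have l2 : Metric.infDist (y k) E ≤ Metric.infDist γ E + dist (y k) γ :=
      Metric.infDist_le_infDist_add_dist
    have l3 : dist (y k) γ ≤ 1 := by
      have := (h1 k).le
      have : (1:ℝ)/(k+1) ≤ 1 := by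
        rw [div_le_one (by positivity)]; linarith [Nat.cast_nonneg (α := ℝ) k]
      linarith [(h1 k).le]
    rw [h3 k] at l1
    linarith
  have hcpt : IsCompact (closedBall γ M ∩ E) :=
    (isCompact_closedBall γ M).inter_right hcl
  obtain ⟨qoo, hqoo, φ, hφ, hconv⟩ := hcpt.tendsto_subseq hball
  have hqooE : qoo ∈ E := hqoo.2
  have hyφ : Tendsto (y ∘ φ) atTop (𝓝 γ) := hyγ.comp hφ.tendsto_atTop
  have hdist1 : Tendsto (fun k => dist (y (φ k)) (q (φ k))) atTop (𝓝 (dist γ qoo)) :=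
    hyφ.dist hconv
  have hdist2 : Tendsto (fun k => dist (y (φ k)) (q (φ k))) atTop
      (𝓝 (Metric.infDist γ E)) := by
    have : (fun k => dist (y (φ k)) (q (φ k))) =
        (fun k => Metric.infDist (y (φ k)) E) := by
      funext k; exact h3 (φ k)
    rw [this]
    exact ((continuous_infDist_pt E).tendsto γ).comp hyφ
  have heq : dist γ qoo = Metric.infDist γ E := tendsto_nhds_unique hdist1 hdist2
  obtain ⟨w, hw, huniq⟩ := hreach γ hγ
  have e1 : qoo = w := huniq qoo ⟨hqooE, heq⟩
  have e2 : a = w := huniq a ⟨ha, haD⟩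
  have hqa : qoo = a := by rw [e1, e2]
  have hlim : Tendsto (fun k => dist (q (φ k)) a) atTop (𝓝 (dist qoo a)) :=
    hconv.dist tendsto_const_nhds
  have : θ ≤ dist qoo a := le_of_tendsto_of_tendsto tendsto_const_nhds hlim
    (Eventually.of_forall fun k => h4 (φ k))
  rw [hqa, dist_self] at this
  linarith
variable {H : Type*} [NormedAddCommGroup H] [InnerProductSpace ℝ H] [ProperSpace H]

set_option maxHeartbeats 1000000 in
lemma aux_push {E : Set H} (hcl : IsClosed E) (hne : E.Nonempty) {R : ℝ}
    (hreach : ∀ x : H, Metric.infDist x E < R →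
      ∃! y, y ∈ E ∧ dist x y = Metric.infDist x E)
    {x : H} (hD0 : 0 < Metric.infDist x E) {s : ℝ}
    (hs1 : Metric.infDist x E < s) (hs2 : s < R) {η : ℝ} (hη0 : 0 < η) (hη1 : η ≤ 1) :
    ∃ γ : H, s ≤ Metric.infDist γ E ∧ dist γ x ≤ (1+η) * (s - Metric.infDist x E) := by
  set D := Metric.infDist x E with hD
  set Good : Set ℝ :=
    {t : ℝ | t ∈ Icc D s ∧ ∃ γ : H, t ≤ Metric.infDist γ E ∧ dist γ x ≤ (1+η) * (t - D)}
    with hGood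
  have hDG : D ∈ Good := ⟨⟨le_refl D, hs1.le⟩, x, le_refl D, by simp⟩
  have hGne : Good.Nonempty := ⟨D, hDG⟩
  have hbdd : BddAbove Good := ⟨s, fun t ht => ht.1.2⟩
  set A := sSup Good with hA
  have hDA : D ≤ A := le_csSup hbdd hDG
  have hAs : A ≤ s := csSup_le hGne (fun t ht => ht.1.2)
  -- A ∈ Good via compactness
  obtain ⟨u, hmono, hconv, humem⟩ := exists_seq_tendsto_sSup hGne hbdd
  choose γs hγ1 hγ2 using fun k => (humem k).2
  have hball : ∀ k, γs k ∈ closedBall x ((1+η) * (s - D)) := by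
    intro k
    have h1 := (humem k).1.2
    have h2 := (humem k).1.1
    refine mem_closedBall.2 ((hγ2 k).trans ?_)
    have l3 : (1+η)*(u k - D) ≤ (1+η)*(s - D) :=
      mul_le_mul_of_nonneg_left (by linarith only [h1]) (by linarith only [hη0])
    linarith only [l3]
  obtain ⟨γst, _, φ, hφ, hγconv⟩ := (isCompact_closedBall x _).tendsto_subseq hball
  have huφ : Tendsto (u ∘ φ) atTop (𝓝 A) := hconv.comp hφ.tendsto_atTop
  have hinf1 : A ≤ Metric.infDist γst E := by
    refine le_of_tendsto_of_tendsto huφ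
      (((continuous_infDist_pt E).tendsto γst).comp hγconv)
      (Eventually.of_forall fun k => hγ1 (φ k))
  have hdist1 : dist γst x ≤ (1+η) * (A - D) := by
    have l1 : Tendsto (fun k => dist (γs (φ k)) x) atTop (𝓝 (dist γst x)) :=
      hγconv.dist tendsto_const_nhds
    have l2 : Tendsto (fun k => (1+η) * (u (φ k) - D)) atTop (𝓝 ((1+η) * (A - D))) :=
      ((huφ.sub tendsto_const_nhds).const_mul (1+η))
    exact le_of_tendsto_of_tendsto l1 l2 (Eventually.of_forall fun k => hγ2 (φ k))
  -- suffices A = s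
  rcases eq_or_lt_of_le hAs with hAeq | hAlt
  · exact ⟨γst, by rw [← hAeq]; exact hinf1, by rw [← hAeq]; exact hdist1⟩
  exfalso
  set T := Metric.infDist γst E with hT
  rcases le_or_gt s T with hTs | hTs
  · have : s ∈ Good := ⟨⟨hs1.le, le_refl s⟩, γst, hTs, by
      have l3 : (1+η)*(A - D) ≤ (1+η)*(s - D) :=
        mul_le_mul_of_nonneg_left (by linarith only [hAlt]) (by linarith only [hη0])
      linarith only [hdist1, l3]⟩
    exact absurd (le_csSup hbdd this) (not_le.2 hAlt)
  have hAT : A ≤ T := hinf1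
  have hT0 : 0 < T := lt_of_lt_of_le hD0 (hDA.trans hAT)
  have hTR : T < R := hTs.trans hs2
  obtain ⟨astar, haE, had⟩ := hcl.exists_infDist_eq_dist hne γst
  have hθpos : 0 < T * Real.sqrt η := by positivity
  obtain ⟨ε₁, hε₁0, hC⟩ := aux_cont hcl hreach hTR haE had.symm hθpos
  set ustar : H := T⁻¹ • (γst - astar) with hustar
  have hnγa : ‖γst - astar‖ = T := by
    rw [← dist_eq_norm, ← had]
  have hnu : ‖ustar‖ = 1 := by
    rw [hustar, norm_smul, hnγa, norm_inv, Real.norm_eq_abs, abs_of_pos hT0,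
      inv_mul_cancel₀ hT0.ne']
  set ε := min (ε₁/2) (s - A) with hε
  have hε0 : 0 < ε := lt_min (by linarith) (by linarith)
  set γ' := γst + ε • ustar with hγ'
  have hd' : dist γ' γst = ε := by
    rw [hγ', dist_eq_norm, add_sub_cancel_left, norm_smul, hnu, mul_one,
      Real.norm_eq_abs, abs_of_pos hε0]
  obtain ⟨q, hqE, hqd⟩ := hcl.exists_infDist_eq_dist hne γ'
  have hδ : dist q astar < T * Real.sqrt η :=
    hC γ' q (by rw [hd']; exact lt_of_le_of_lt (min_le_left _ _) (by linarith)) hqE hqd.symm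
  -- numeric computation
  set P : ℝ := ⟪ustar, q - astar⟫ with hP
  set δ := ‖q - astar‖ with hδn
  set χ := ‖γ' - q‖ with hχ
  have hγa_smul : T • ustar = γst - astar := by
    rw [hustar, smul_smul, mul_inv_cancel₀ hT0.ne', one_smul]
  have key1 : ‖γst - q‖^2 = T^2 - 2*T*P + δ^2 := by
    have : γst - q = (γst - astar) - (q - astar) := by abel
    rw [this, norm_sub_sq_real, ← hγa_smul, norm_smul, real_inner_smul_left, hnu]
    simp [hP, abs_of_pos hT0]
    ring
  have key2 : T ≤ ‖γst - q‖ := by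
    rw [← dist_eq_norm]
    exact Metric.infDist_le_dist_of_mem hqE
  have key3 : χ^2 = ‖γst - q‖^2 + 2*ε*(T - P) + ε^2 := by
    have : γ' - q = (γst - q) + ε • ustar := by rw [hγ']; abel
    rw [hχ, this, norm_add_sq_real, real_inner_smul_right, norm_smul, hnu,
      Real.norm_eq_abs, abs_of_pos hε0]
    have hip : ⟪γst - q, ustar⟫ = T - P := by
      have h2 : γst - q = (γst - astar) - (q - astar) := by abel
      have e1 : ⟪γst - astar, ustar⟫ = T := by
        rw [← hγa_smul, real_inner_smul_left, real_inner_self_eq_norm_sq, hnu]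
        ring
      have e2 : ⟪q - astar, ustar⟫ = P := by
        rw [real_inner_comm ustar (q - astar), hP]
      rw [h2, inner_sub_left, e1, e2]
    rw [hip]; ring
  have hPle : 2*T*P ≤ δ^2 := by
    have l1 : T^2 ≤ ‖γst - q‖^2 := pow_le_pow_left₀ hT0.le key2 2
    linarith only [key1, l1]
  have hδ2 : δ^2 ≤ T^2 * η := by
    have h1 : δ ≤ T * Real.sqrt η := by rw [hδn, ← dist_eq_norm]; exact hδ.le
    have h2 : (T * Real.sqrt η)^2 = T^2 * η := by
      rw [mul_pow, Real.sq_sqrt hη0.le]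
    calc δ^2 ≤ (T * Real.sqrt η)^2 := pow_le_pow_left₀ (by rw [hδn]; positivity) h1 2
    _ = T^2 * η := h2
  set ε' := ε / (1+η) with hε'
  have hε'0 : 0 < ε' := by positivity
  have hεε' : ε = ε' * (1+η) := by rw [hε', div_mul_cancel₀ _ (by positivity)]
  have hε'ε : ε' ≤ ε := by
    rw [hε']
    exact div_le_self hε0.le (by linarith only [hη0])
  have key4 : T*(T + ε')^2 ≤ T*χ^2 := by
    have h1 : (T+ε)*(2*T*P) ≤ (T+ε)*δ^2 :=
      mul_le_mul_of_nonneg_left hPle (by positivity)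
    have h2 : ε*δ^2 ≤ ε*(T^2*η) := mul_le_mul_of_nonneg_left hδ2 hε0.le
    have h3 : 0 ≤ T^2*ε'*η*(1-η) := mul_nonneg (by positivity) (by linarith)
    have h4 : 0 ≤ T*ε'^2*η*(2+η) := by positivity
    have hrw : T*χ^2 = T*(T+ε)^2 - (T+ε)*(2*T*P) + T*δ^2 := by
      rw [key3, key1]; ring
    have hrw2 : T*(T+ε)^2 - ε*(T^2*η) - T*(T+ε')^2
        = T^2*ε'*η*(1-η) + T*ε'^2*η*(2+η) := by rw [hεε']; ring
    linarith only [h1, h2, h3, h4, hrw, hrw2]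
  have hχ2 : (T + ε')^2 ≤ χ^2 := le_of_mul_le_mul_left key4 hT0
  have hχval : Metric.infDist γ' E = χ := by rw [hqd, dist_eq_norm]
  have hχge : T + ε' ≤ Metric.infDist γ' E := by
    rw [hχval]
    by_contra hcon2
    push_neg at hcon2
    have l1 : χ^2 < (T + ε')^2 :=
      pow_lt_pow_left₀ hcon2 (by rw [hχ]; positivity) two_ne_zero
    linarith [hχ2]
  -- new member of Good
  set t'' := min (T + ε') s with ht''
  have ht''A : A + ε' ≤ t'' := by
    refine le_min (by linarith) ?_
    have : ε ≤ s - A := min_le_right _ _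
    linarith
  have hmem : t'' ∈ Good := by
    refine ⟨⟨?_, min_le_right _ _⟩, γ', ?_, ?_⟩
    · exact le_trans (by linarith) ht''A
    · exact le_trans (min_le_left _ _) hχge
    · have l1 : dist γ' x ≤ ε + (1+η)*(A - D) := by
        calc dist γ' x ≤ dist γ' γst + dist γst x := dist_triangle _ _ _
        _ ≤ ε + (1+η)*(A - D) := by rw [hd']; linarith
      have l2 : (1+η)*(A - D) + ε ≤ (1+η)*(t'' - D) := by
        have l3 : A + ε' ≤ t'' := ht''A
        have l4 : (1+η)*(A + ε' - D) ≤ (1+η)*(t'' - D) :=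
          mul_le_mul_of_nonneg_left (by linarith) (by linarith)
        have l5 : (1+η)*ε' = ε := by rw [hεε']; ring
        linarith only [l4, l5]
      linarith
  have : t'' ≤ A := le_csSup hbdd hmem
  linarith
lemma aux_key {E : Set H} (hcl : IsClosed E) (hne : E.Nonempty) {R : ℝ} (hR : 0 < R)
    (hreach : ∀ x : H, Metric.infDist x E < R →
      ∃! y, y ∈ E ∧ dist x y = Metric.infDist x E)
    {x a : H} (ha : a ∈ E) (haD : dist x a = Metric.infDist x E)
    (hDR : Metric.infDist x E < R) {b : H} (hb : b ∈ E) :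
    ⟪x - a, b - a⟫ ≤ Metric.infDist x E * ‖b - a‖^2 / (2*R) := by
  set D := Metric.infDist x E with hD
  have hD0 : 0 ≤ D := Metric.infDist_nonneg
  rcases eq_or_lt_of_le hD0 with hDeq | hDpos
  · -- D = 0 : x = a
    have hxa : x = a := by
      have : dist x a = 0 := by rw [haD, ← hDeq]
      exact dist_eq_zero.1 this
    rw [hxa, sub_self, inner_zero_left]
    positivity
  -- main case
  have keys : ∀ s : ℝ, D < s → s < R → ⟪x - a, b - a⟫ ≤ D * ‖b - a‖^2 / (2*s) := by
    intro s hs1 hs2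
    -- approximate points with η = 1/(k+1)
    have hpush : ∀ k : ℕ, ∃ γ : H, s ≤ Metric.infDist γ E ∧
        dist γ x ≤ (1 + 1/((k:ℝ)+1)) * (s - D) := by
      intro k
      exact aux_push hcl hne hreach hDpos hs1 hs2 (by positivity)
        (by rw [div_le_one (by positivity)]; linarith [Nat.cast_nonneg (α := ℝ) k])
    choose γs hγ1 hγ2 using hpush
    have hball : ∀ k, γs k ∈ closedBall x (2*(s-D)) := by
      intro k
      refine mem_closedBall.2 ((hγ2 k).trans ?_)
      have l1 : (1:ℝ)/(k+1) ≤ 1 := by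
        rw [div_le_one (by positivity)]; linarith [Nat.cast_nonneg (α := ℝ) k]
      have l2 : (0:ℝ) ≤ s - D := by linarith only [hs1]
      nlinarith [l1, l2]
    obtain ⟨γ, _, φ, hφ, hγconv⟩ := (isCompact_closedBall x _).tendsto_subseq hball
    have hinfγ : s ≤ Metric.infDist γ E :=
      le_of_tendsto_of_tendsto
        (tendsto_const_nhds : Tendsto (fun _ : ℕ => s) atTop (𝓝 s))
        (((continuous_infDist_pt E).tendsto γ).comp hγconv)
        (Eventually.of_forall fun k => hγ1 (φ k))
    have hdγ : dist γ x ≤ s - D := by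
      have l1 : Tendsto (fun k => dist (γs (φ k)) x) atTop (𝓝 (dist γ x)) :=
        hγconv.dist tendsto_const_nhds
      have l2 : Tendsto (fun k : ℕ => (1 + 1/((φ k : ℝ)+1)) * (s - D)) atTop
          (𝓝 ((1+0) * (s - D))) := by
        refine Tendsto.mul_const _ (tendsto_const_nhds.add ?_)
        exact tendsto_one_div_add_atTop_nhds_zero_nat.comp hφ.tendsto_atTop
      rw [add_zero, one_mul] at l2
      exact le_of_tendsto_of_tendsto l1 l2 (Eventually.of_forall fun k => hγ2 (φ k))
    -- rigidity
    have e1 : dist γ a ≤ s := by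
      calc dist γ a ≤ dist γ x + dist x a := dist_triangle _ _ _
      _ ≤ (s - D) + D := by linarith only [hdγ, haD]
      _ = s := by ring
    have e2 : s ≤ dist γ a := hinfγ.trans (Metric.infDist_le_dist_of_mem ha)
    have e3 : dist γ a = s := le_antisymm e1 e2
    have e4 : dist γ x = s - D := by
      refine le_antisymm hdγ ?_
      have := dist_triangle γ x a
      rw [e3, haD] at this
      linarith only [this]
    -- norms
    have n1 : ‖γ - a‖ = s := by rw [← dist_eq_norm, e3]
    have n2 : ‖γ - x‖ = s - D := by rw [← dist_eq_norm, e4]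
    have n3 : ‖x - a‖ = D := by rw [← dist_eq_norm, haD]
    have ip1 : ⟪γ - x, x - a⟫ = (s - D) * D := by
      have hsum : γ - a = (γ - x) + (x - a) := by abel
      have := norm_add_sq_real (γ - x) (x - a)
      rw [← hsum, n1, n2, n3] at this
      linarith only [this]
    have ip2 : ⟪γ - a, x - a⟫ = s * D := by
      have hsum : γ - a = (γ - x) + (x - a) := by abel
      rw [hsum, inner_add_left, ip1, real_inner_self_eq_norm_sq, n3]
      ring
    have hγeq : γ = a + (s/D) • (x - a) := by
      have hz : ‖(γ - a) - (s/D) • (x - a)‖^2 = 0 := by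
        rw [norm_sub_sq_real, real_inner_smul_right, ip2, norm_smul, n1,
          Real.norm_eq_abs, abs_of_pos (div_pos (by linarith only [hDpos, hs1]) hDpos), n3]
        field_simp
        ring
      rw [pow_eq_zero_iff two_ne_zero, norm_eq_zero, sub_eq_zero] at hz
      rw [← hz]
      abel
    -- final inequality at level s
    have hfin : s ≤ dist γ b := hinfγ.trans (Metric.infDist_le_dist_of_mem hb)
    have hfin2 : s^2 ≤ ‖γ - b‖^2 := by
      rw [← dist_eq_norm]
      exact pow_le_pow_left₀ (by linarith only [hDpos, hs1]) hfin 2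
    have hexp : ‖γ - b‖^2 = (s/D)^2 * D^2 - 2*(s/D)*⟪x - a, b - a⟫ + ‖b - a‖^2 := by
      have : γ - b = (s/D) • (x - a) - (b - a) := by rw [hγeq]; abel
      rw [this, norm_sub_sq_real, real_inner_smul_left, norm_smul,
        Real.norm_eq_abs, abs_of_pos (div_pos (by linarith only [hDpos, hs1]) hDpos), n3, mul_pow]
      ring
    have hsD : (s/D)^2 * D^2 = s^2 := by field_simp
    set c' : ℝ := ⟪x - a, b - a⟫ with hc'
    have hmain : 2*(s/D)*c' ≤ ‖b - a‖^2 := by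
      rw [hsD] at hexp
      linarith only [hfin2, hexp]
    rw [le_div_iff₀ (show (0:ℝ) < 2*s by linarith only [hDpos, hs1])]
    have l := mul_le_mul_of_nonneg_left hmain hD0
    have l2 : D * (s/D) = s := by field_simp
    have l3 : 2*(D*(s/D))*c' = 2*s*c' := by rw [l2]
    linarith only [l, l3]
  -- pass to the limit s → R
  set c := (⟪x - a, b - a⟫ : ℝ) with hc
  rcases le_or_gt c 0 with hc0 | hc0
  · have : 0 ≤ D * ‖b - a‖^2 / (2*R) := by positivity
    linarith only [hc0, this]
  by_contra hcon
  push_neg at hcon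
  have hQR : D * ‖b - a‖^2 / (2*c) < R := by
    rw [div_lt_iff₀ (show (0:ℝ) < 2*c by linarith only [hc0])]
    rw [div_lt_iff₀ (show (0:ℝ) < 2*R by linarith only [hR])] at hcon
    linarith only [hcon]
  obtain ⟨z, hz1, hz2⟩ := exists_between (max_lt hQR hDR)
  have hzD : D < z := lt_of_le_of_lt (le_max_right _ _) hz1
  have hzQ : D * ‖b - a‖^2 / (2*c) < z := lt_of_le_of_lt (le_max_left _ _) hz1
  have := keys z hzD hz2
  rw [le_div_iff₀ (show (0:ℝ) < 2*z by linarith only [hzD, hDpos])] at this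
  rw [div_lt_iff₀ (show (0:ℝ) < 2*c by linarith only [hc0])] at hzQ
  linarith only [this, hzQ]

theorem stmt_11 (n : ℕ) (E : Set (EuclideanSpace ℝ (Fin n)))
    (hcl : IsClosed E) (hne : E.Nonempty) (R : ℝ) (hR : 0 < R)
    (hreach : ∀ x : EuclideanSpace ℝ (Fin n), Metric.infDist x E < R →
      ∃! y, y ∈ E ∧ dist x y = Metric.infDist x E)
    (r : ℝ) (hr0 : 0 < r) (hrR : r < R) :
    (∀ x : EuclideanSpace ℝ (Fin n), Metric.infDist x E ≤ r →
      ∃! y, y ∈ E ∧ dist x y = Metric.infDist x E) ∧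
    ∃ π : EuclideanSpace ℝ (Fin n) → EuclideanSpace ℝ (Fin n),
      (∀ x, Metric.infDist x E ≤ r → π x ∈ E ∧ dist x (π x) = Metric.infDist x E) ∧
      LipschitzOnWith (Real.toNNReal (R / (R - r))) π
        {x : EuclideanSpace ℝ (Fin n) | Metric.infDist x E ≤ r} := by
  have hEx : ∀ x : EuclideanSpace ℝ (Fin n),
      ∃ y, y ∈ E ∧ dist x y = Metric.infDist x E := by
    intro x
    obtain ⟨y, hy, hyd⟩ := hcl.exists_infDist_eq_dist hne x
    exact ⟨y, hy, hyd.symm⟩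
  refine ⟨fun x hx => hreach x (lt_of_le_of_lt hx hrR), ?_⟩
  set π : EuclideanSpace ℝ (Fin n) → EuclideanSpace ℝ (Fin n) :=
    fun x => Classical.choose (hEx x) with hπ
  have hπspec : ∀ x, π x ∈ E ∧ dist x (π x) = Metric.infDist x E :=
    fun x => Classical.choose_spec (hEx x)
  refine ⟨π, fun x _ => hπspec x, ?_⟩
  rw [lipschitzOnWith_iff_dist_le_mul]
  intro x hx y hy
  simp only [Set.mem_setOf_eq] at hx hy
  have hcoe : (Real.toNNReal (R/(R-r)) : ℝ) = R/(R-r) :=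
    Real.coe_toNNReal _ (div_nonneg hR.le (by linarith))
  rw [hcoe]
  obtain ⟨haE, haD⟩ := hπspec x
  obtain ⟨hbE, hbD⟩ := hπspec y
  have key1 : ⟪x - π x, π y - π x⟫ ≤ Metric.infDist x E * ‖π y - π x‖^2 / (2*R) :=
    aux_key hcl hne hR hreach haE haD (lt_of_le_of_lt hx hrR) hbE
  have key2 : ⟪y - π y, π x - π y⟫ ≤ Metric.infDist y E * ‖π x - π y‖^2 / (2*R) :=
    aux_key hcl hne hR hreach hbE hbD (lt_of_le_of_lt hy hrR) haE
  have hKnorm : ‖π y - π x‖ = ‖π x - π y‖ := norm_sub_rev _ _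
  have key1' : ⟪x - π x, π y - π x⟫ ≤ r * ‖π x - π y‖^2 / (2*R) := by
    refine key1.trans ?_
    rw [hKnorm]
    exact div_le_div_of_nonneg_right
      (mul_le_mul_of_nonneg_right hx (by positivity)) (by linarith)
  have key2' : ⟪y - π y, π x - π y⟫ ≤ r * ‖π x - π y‖^2 / (2*R) := by
    refine key2.trans ?_
    exact div_le_div_of_nonneg_right
      (mul_le_mul_of_nonneg_right hy (by positivity)) (by linarith)
  have hCS : ⟪x - y, π x - π y⟫ ≤ ‖x - y‖ * ‖π x - π y‖ := real_inner_le_norm _ _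
  have hid : ‖π x - π y‖^2
      = ⟪x - π x, π y - π x⟫ + ⟪x - y, π x - π y⟫ + ⟪y - π y, π x - π y⟫ := by
    have h1 : π x - π y = (π x - x) + ((x - y) + (y - π y)) := by abel
    have h2 : (⟪(π x - x) + ((x - y) + (y - π y)), π x - π y⟫ : ℝ)
        = ⟪x - π x, π y - π x⟫ + ⟪x - y, π x - π y⟫ + ⟪y - π y, π x - π y⟫ := by
      rw [inner_add_left, inner_add_left]
      have e : (⟪π x - x, π x - π y⟫ : ℝ) = ⟪x - π x, π y - π x⟫ := by
        rw [show π x - x = -(x - π x) by abel, show π x - π y = -(π y - π x) by abel,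
          inner_neg_neg]
      rw [e]; ring
    calc ‖π x - π y‖^2 = ⟪π x - π y, π x - π y⟫ := (real_inner_self_eq_norm_sq _).symm
    _ = ⟪(π x - x) + ((x - y) + (y - π y)), π x - π y⟫ := by rw [← h1]
    _ = _ := h2
  -- combine
  set K := ‖π x - π y‖ with hK
  set N := ‖x - y‖ with hN
  have hK0 : 0 ≤ K := norm_nonneg _
  have hsum : K^2 ≤ r*K^2/(2*R) + r*K^2/(2*R) + N*K := by
    linarith only [hid, key1', key2', hCS]
  have hdiv : R*(r*K^2/(2*R)) = r*K^2/2 := by field_simp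
  have h2 : (R - r)*K^2 ≤ R*(N*K) := by
    have := mul_le_mul_of_nonneg_left hsum hR.le
    rw [mul_add, mul_add, hdiv] at this
    nlinarith only [this]
  rw [dist_eq_norm, dist_eq_norm, ← hK, ← hN]
  rcases eq_or_lt_of_le hK0 with hKz | hKpos
  · rw [← hKz]
    have : (0:ℝ) ≤ N := hN ▸ norm_nonneg _
    exact mul_nonneg (div_nonneg hR.le (by linarith)) this
  rw [div_mul_eq_mul_div, le_div_iff₀ (by linarith : (0:ℝ) < R - r)]
  refine le_of_mul_le_mul_right ?_ hKpos
  calc K*(R-r)*K = (R-r)*K^2 := by ring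
  _ ≤ R*(N*K) := h2
  _ = R*N*K := by ring
end

section
/- Let Γ ⊂ ℝ^n be compact and connected with H¹(Γ) < ∞. Then Γ is path-connected and in fact is the image of a Lipschitz map from a compact interval into ℝ^n; in particular Γ is (H¹,1)-rectifiable. -/
open MeasureTheory Metric Set Filter
open scoped ENNReal NNReal

lemma lemA {n : ℕ} {Γ : Set (EuclideanSpace ℝ (Fin n))} (hΓ : IsConnected Γ)
    {x y : EuclideanSpace ℝ (Fin n)} (hx : x ∈ Γ) (hy : y ∈ Γ) {r : ℝ} (hr : 0 ≤ r)
    (hxy : r ≤ dist x y) :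
    ENNReal.ofReal r ≤ μH[1] (Γ ∩ Metric.closedBall x r) := by
  set g : EuclideanSpace ℝ (Fin n) → ℝ := fun z => dist z x with hg
  have hlip : LipschitzWith 1 g := LipschitzWith.dist_left x
  have himg : Set.Icc (0:ℝ) r ⊆ g '' (Γ ∩ Metric.closedBall x r) := by
    intro s hs
    have hconn2 : IsPreconnected (g '' Γ) :=
      (hΓ.image _ hlip.continuous.continuousOn).isPreconnected
    have h0 : (0:ℝ) ∈ g '' Γ := ⟨x, hx, dist_self x⟩
    have hd : dist y x ∈ g '' Γ := ⟨y, hy, rfl⟩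
    have hIcc : Set.Icc (0:ℝ) (dist y x) ⊆ g '' Γ := hconn2.Icc_subset h0 hd
    obtain ⟨z, hz, hzs⟩ := hIcc ⟨hs.1, hs.2.trans (by rw [dist_comm]; exact hxy)⟩
    exact ⟨z, ⟨hz, by simp only [Metric.mem_closedBall]; exact le_of_eq_of_le hzs hs.2⟩, hzs⟩
  calc ENNReal.ofReal r = μH[1] (Set.Icc (0:ℝ) r) := by
        rw [MeasureTheory.hausdorffMeasure_real]; rw [Real.volume_Icc]; norm_num
    _ ≤ μH[1] (g '' (Γ ∩ Metric.closedBall x r)) := measure_mono himg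
    _ ≤ 1 * μH[1] (Γ ∩ Metric.closedBall x r) := by
        simpa using hlip.hausdorffMeasure_image_le (d := 1) (by norm_num) (Γ ∩ Metric.closedBall x r)
    _ = _ := one_mul _

lemma chain_conn {X : Type*} [MetricSpace X] {Γ : Set X} (hconn : IsPreconnected Γ)
    {δ : ℝ} (hδ : 0 < δ) {x y : X} (hx : x ∈ Γ) (hy : y ∈ Γ) :
    Relation.ReflTransGen (fun a b : X => a ∈ Γ ∧ b ∈ Γ ∧ dist a b < δ) x y := by
  by_contra hxy
  set r : X → X → Prop := fun a b => a ∈ Γ ∧ b ∈ Γ ∧ dist a b < δ with hr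
  set S : Set X := {z | Relation.ReflTransGen r x z} with hS
  set U : Set X := ⋃ a ∈ S ∩ Γ, Metric.ball a δ with hU
  set V : Set X := ⋃ a ∈ Γ \ S, Metric.ball a δ with hV
  have hUo : IsOpen U := isOpen_biUnion (fun _ _ => Metric.isOpen_ball)
  have hVo : IsOpen V := isOpen_biUnion (fun _ _ => Metric.isOpen_ball)
  have hcov : Γ ⊆ U ∪ V := by
    intro z hz
    by_cases hzS : z ∈ S
    · exact Or.inl (Set.mem_biUnion ⟨hzS, hz⟩ (Metric.mem_ball_self hδ))
    · exact Or.inr (Set.mem_biUnion ⟨hz, hzS⟩ (Metric.mem_ball_self hδ))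
  have hxU : x ∈ Γ ∩ U := ⟨hx, Set.mem_biUnion ⟨Relation.ReflTransGen.refl, hx⟩ (Metric.mem_ball_self hδ)⟩
  have hyV : y ∈ Γ ∩ V := ⟨hy, Set.mem_biUnion ⟨hy, hxy⟩ (Metric.mem_ball_self hδ)⟩
  obtain ⟨z, hzΓ, hzU, hzV⟩ := hconn U V hUo hVo hcov ⟨x, hxU⟩ ⟨y, hyV⟩
  obtain ⟨a, ⟨haS, haΓ⟩, hza⟩ := Set.mem_iUnion₂.1 hzU
  obtain ⟨b, ⟨hbΓ, hbS⟩, hzb⟩ := Set.mem_iUnion₂.1 hzV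
  have hzS : z ∈ S := haS.tail ⟨haΓ, hzΓ, by rw [dist_comm]; exact hza⟩
  exact hbS (hzS.tail ⟨hzΓ, hbΓ, hzb⟩)

lemma card_bound {n : ℕ} {Γ : Set (EuclideanSpace ℝ (Fin n))} (hcl : IsClosed Γ)
    (hconn : IsConnected Γ) {δ : ℝ} (hδ : 0 < δ)
    (hfar : ∀ x ∈ Γ, ∃ y ∈ Γ, δ/2 ≤ dist x y)
    (F : Finset (EuclideanSpace ℝ (Fin n))) (hFΓ : ↑F ⊆ Γ)
    (hsep : ∀ a ∈ F, ∀ b ∈ F, a ≠ b → δ < dist a b) :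
    (F.card : ℝ≥0∞) * ENNReal.ofReal (δ/2) ≤ μH[1] Γ := by
  have hball : ∀ a ∈ F, ENNReal.ofReal (δ/2) ≤ μH[1] (Γ ∩ Metric.closedBall a (δ/2)) := by
    intro a ha
    obtain ⟨y, hy, hdy⟩ := hfar a (hFΓ ha)
    exact lemA hconn (hFΓ ha) hy (by linarith) hdy
  have hdisj : (↑F : Set _).PairwiseDisjoint (fun a => Γ ∩ Metric.closedBall a (δ/2)) := by
    intro a ha b hb hab
    have := hsep a ha b hb hab
    exact (Set.disjoint_of_subset inter_subset_right inter_subset_right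
      (Metric.closedBall_disjoint_closedBall (by linarith)))
  calc (F.card : ℝ≥0∞) * ENNReal.ofReal (δ/2)
      = ∑ a ∈ F, ENNReal.ofReal (δ/2) := by rw [Finset.sum_const, nsmul_eq_mul]
    _ ≤ ∑ a ∈ F, μH[1] (Γ ∩ Metric.closedBall a (δ/2)) := Finset.sum_le_sum hball
    _ = μH[1] (⋃ a ∈ F, (Γ ∩ Metric.closedBall a (δ/2))) := by
        refine (measure_biUnion_finset hdisj (fun a ha => ?_)).symm
        exact hcl.measurableSet.inter measurableSet_closedBall
    _ ≤ μH[1] Γ := measure_mono (by simp [Set.iUnion_subset_iff])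

lemma exists_net {n : ℕ} {Γ : Set (EuclideanSpace ℝ (Fin n))} (hcomp : IsCompact Γ)
    (hconn : IsConnected Γ) (hlen : μH[1] Γ < ⊤) {δ : ℝ} (hδ : 0 < δ)
    (hfar : ∀ x ∈ Γ, ∃ y ∈ Γ, δ/2 ≤ dist x y) :
    ∃ N : Finset (EuclideanSpace ℝ (Fin n)), ↑N ⊆ Γ ∧ N.Nonempty ∧
      (∀ y ∈ Γ, ∃ a ∈ N, dist y a ≤ δ) ∧
      (N.card : ℝ) * (δ/2) ≤ (μH[1] Γ).toReal := by
  classical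
  have hcb : ∀ (F : Finset (EuclideanSpace ℝ (Fin n))), ↑F ⊆ Γ →
      (∀ a ∈ F, ∀ b ∈ F, a ≠ b → δ < dist a b) → (F.card : ℝ) * (δ/2) ≤ (μH[1] Γ).toReal := by
    intro F h1 h2
    have := card_bound hcomp.isClosed hconn hδ hfar F h1 h2
    have h3 : ((F.card : ℝ≥0∞) * ENNReal.ofReal (δ/2)).toReal ≤ (μH[1] Γ).toReal :=
      ENNReal.toReal_mono hlen.ne this
    rw [ENNReal.toReal_mul, ENNReal.toReal_natCast, ENNReal.toReal_ofReal (by linarith)] at h3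
    exact h3
  -- the set of achievable cardinalities
  set C : Set ℕ := {k | ∃ F : Finset (EuclideanSpace ℝ (Fin n)), ↑F ⊆ Γ ∧
      (∀ a ∈ F, ∀ b ∈ F, a ≠ b → δ < dist a b) ∧ F.card = k} with hC
  obtain ⟨x₀, hx₀⟩ := hconn.nonempty
  have hC1 : 1 ∈ C := ⟨{x₀}, by simpa using hx₀, by simp, by simp⟩
  have hCbdd : BddAbove C := by
    refine ⟨Nat.ceil ((μH[1] Γ).toReal / (δ/2)), fun k hk => ?_⟩
    obtain ⟨F, h1, h2, h3⟩ := hk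
    have := hcb F h1 h2
    rw [h3] at this
    have : (k : ℝ) ≤ (μH[1] Γ).toReal / (δ/2) := by
      rw [le_div_iff₀ (by linarith)]; exact this
    calc k ≤ Nat.ceil ((k:ℝ)) := by simp
      _ ≤ Nat.ceil ((μH[1] Γ).toReal / (δ/2)) := Nat.ceil_le_ceil this
  -- pick an element of maximal cardinality
  have hCne : C.Nonempty := ⟨1, hC1⟩
  have hmax : sSup C ∈ C := Nat.sSup_mem hCne hCbdd
  obtain ⟨N, hN1, hN2, hN3⟩ := hmax
  have hNne : N.Nonempty := by
    rw [← Finset.card_pos, hN3]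
    exact le_csSup hCbdd hC1
  refine ⟨N, hN1, hNne, ?_, hcb N hN1 hN2⟩
  intro y hy
  by_contra hbad
  push_neg at hbad
  have hyN : y ∉ N := fun h => absurd (by simpa using hbad y h) (not_lt.2 hδ.le)
  have hmem : N.card + 1 ∈ C := by
    refine ⟨insert y N, ?_, ?_, by rw [Finset.card_insert_of_notMem hyN]⟩
    · intro z hz
      rcases Finset.mem_insert.1 (Finset.mem_coe.1 hz) with rfl | h
      · exact hy
      · exact hN1 h
    · intro a ha b hb hab
      simp only [Finset.mem_insert] at ha hb
      rcases ha with rfl | ha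
      · rcases hb with rfl | hb
        · exact absurd rfl hab
        · exact hbad b hb
      · rcases hb with rfl | hb
        · rw [dist_comm]; exact hbad a ha
        · exact hN2 a ha b hb hab
  have := le_csSup hCbdd hmem
  rw [hN3] at this
  omega

lemma cross {α : Type*} {r : α → α → Prop} {S : Set α} :
    ∀ {x w : α}, Relation.ReflTransGen r x w → x ∈ S → w ∉ S →
      ∃ u v, u ∈ S ∧ v ∉ S ∧ r u v := by
  intro x w h
  induction h with
  | refl => intro hx hw; exact absurd hx hw
  | @tail b c hxb hbc ih =>
    intro hx hw
    by_cases hb : b ∈ S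
    · exact ⟨b, c, hb, hw, hbc⟩
    · exact ih hx hb

lemma walk_extend {α : Type*} {r : α → α → Prop} {l : List α} (hl : l.Chain' r)
    {u v : α} (hu : u ∈ l) (huv : r u v) (hvu : r v u) :
    ∃ l' : List α, l'.Chain' r ∧ l'.length = l.length + 2 ∧ v ∈ l' ∧ (∀ a ∈ l, a ∈ l') ∧
      (∀ a ∈ l', a ∈ l ∨ a = v) := by
  obtain ⟨s, t, rfl⟩ := List.append_of_mem hu
  refine ⟨s ++ u :: v :: u :: t, ?_, by simp; omega, by simp,
    by intro a ha; simp at ha ⊢; tauto, by intro a ha; simp at ha ⊢; tauto⟩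
  rw [List.Chain', List.isChain_append] at hl ⊢
  refine ⟨hl.1, ?_, by simpa using hl.2.2⟩
  rw [List.isChain_cons_cons, List.isChain_cons_cons]
  exact ⟨huv, hvu, hl.2.1⟩

lemma exists_walk {α : Type*} [DecidableEq α] (N : Finset α) (r : α → α → Prop)
    (hsymm : ∀ a b, r a b → r b a)
    (hconn : ∀ a ∈ N, ∀ b ∈ N, Relation.ReflTransGen (fun u v => u ∈ N ∧ v ∈ N ∧ r u v) a b)
    (hne : N.Nonempty) :
    ∃ l : List α, l ≠ [] ∧ (∀ a ∈ l, a ∈ N) ∧ (∀ a ∈ N, a ∈ l) ∧ l.Chain' r ∧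
      l.length ≤ 2 * N.card := by
  obtain ⟨x₀, hx₀⟩ := hne
  suffices h : ∀ k (l : List α), l ≠ [] → (∀ a ∈ l, a ∈ N) → l.Chain' r →
      (N \ l.toFinset).card ≤ k →
      ∃ l' : List α, l' ≠ [] ∧ (∀ a ∈ l', a ∈ N) ∧ (∀ a ∈ N, a ∈ l') ∧ l'.Chain' r ∧
        l'.length ≤ l.length + 2 * k by
    obtain ⟨l, h1, h2, h3, h4, h5⟩ := h ((N \ {x₀}).card) [x₀] (by simp)
      (by simpa using hx₀) (List.isChain_singleton _) le_rfl
    refine ⟨l, h1, h2, h3, h4, ?_⟩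
    have hcard : (N \ {x₀}).card = N.card - 1 := by
      rw [Finset.sdiff_singleton_eq_erase, Finset.card_erase_of_mem hx₀]
    have hpos : 1 ≤ N.card := Finset.card_pos.2 ⟨x₀, hx₀⟩
    simp only [List.length_singleton] at h5
    omega
  intro k
  induction k with
  | zero =>
    intro l h1 h2 h3 h4
    refine ⟨l, h1, h2, fun a ha => ?_, h3, by omega⟩
    have : N \ l.toFinset = ∅ := Finset.card_eq_zero.1 (Nat.le_zero.1 h4)
    by_contra hal
    have : a ∈ N \ l.toFinset := Finset.mem_sdiff.2 ⟨ha, fun h => hal (List.mem_toFinset.1 h)⟩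
    simp [‹N \ l.toFinset = ∅›] at this
  | succ k ih =>
    intro l h1 h2 h3 h4
    by_cases hcov : ∀ a ∈ N, a ∈ l
    · exact ⟨l, h1, h2, hcov, h3, by omega⟩
    push_neg at hcov
    obtain ⟨w, hwN, hwl⟩ := hcov
    have hx : l.head h1 ∈ l := List.head_mem h1
    obtain ⟨u, v, hu, hv, hruv⟩ :=
      cross (S := {a | a ∈ l}) (hconn _ (h2 _ hx) w hwN) hx hwl
    obtain ⟨l', c1, c2, c3, c4, c5⟩ := walk_extend h3 hu hruv.2.2 (hsymm _ _ hruv.2.2)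
    have hvN : v ∈ N := hruv.2.1
    have hsub : N \ l'.toFinset ⊆ (N \ l.toFinset).erase v := by
      intro a ha
      rw [Finset.mem_erase]
      obtain ⟨haN, hal'⟩ := Finset.mem_sdiff.1 ha
      refine ⟨fun hav => hal' (List.mem_toFinset.2 (hav ▸ c3)), Finset.mem_sdiff.2 ⟨haN, ?_⟩⟩
      exact fun h => hal' (List.mem_toFinset.2 (c4 a (List.mem_toFinset.1 h)))
    have hvmem : v ∈ N \ l.toFinset := Finset.mem_sdiff.2 ⟨hvN, fun h => hv (List.mem_toFinset.1 h)⟩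
    have hcard : (N \ l'.toFinset).card ≤ k := by
      have h5 := Finset.card_le_card hsub
      rw [Finset.card_erase_of_mem hvmem] at h5
      have : 1 ≤ (N \ l.toFinset).card := Finset.card_pos.2 ⟨v, hvmem⟩
      omega
    have hl'ne : l' ≠ [] := by
      intro h; rw [h] at c3; exact absurd c3 List.not_mem_nil
    have hl'N : ∀ a ∈ l', a ∈ N := by
      intro a ha
      rcases c5 a ha with h | rfl
      · exact h2 a h
      · exact hvN
    obtain ⟨l'', d1, d2, d3, d4, d5⟩ := ih l' hl'ne hl'N c1 hcard
    exact ⟨l'', d1, d2, d3, d4, by omega⟩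

lemma list_dist_le {X : Type*} [MetricSpace X] {l : List X} {c : ℝ}
    (hchain : l.Chain' (fun a b => dist a b ≤ c)) :
    ∀ (i j : ℕ) (hi : i < l.length) (hj : j < l.length), i ≤ j →
      dist (l.get ⟨i, hi⟩) (l.get ⟨j, hj⟩) ≤ c * ((j : ℝ) - i) := by
  have hstep := List.isChain_iff_getElem.1 hchain
  intro i j hi hj hij
  induction j with
  | zero =>
    interval_cases i
    simp
  | succ j ih =>
    rcases Nat.lt_or_ge i (j+1) with h | h
    · have hij' : i ≤ j := by omega
      have hj' : j < l.length := by omega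
      have h1 := ih hj' hij'
      have h2 : dist (l.get ⟨j, hj'⟩) (l.get ⟨j+1, hj⟩) ≤ c := hstep j (by omega)
      have h3 := dist_triangle (l.get ⟨i, hi⟩) (l.get ⟨j, hj'⟩) (l.get ⟨j+1, hj⟩)
      have : ((j:ℝ)+1) - i = ((j:ℝ) - i) + 1 := by ring
      push_cast
      nlinarith [dist_nonneg (α := X) (x := l.get ⟨i, hi⟩) (y := l.get ⟨j, hj'⟩)]
    · have : i = j + 1 := by omega
      subst this
      simp

lemma extend_euclidean {n : ℕ} (F : ℝ → EuclideanSpace ℝ (Fin n)) (S : Set ℝ) (K : ℝ≥0)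
    (hF : LipschitzOnWith K F S) :
    ∃ G : ℝ → EuclideanSpace ℝ (Fin n),
      LipschitzWith (((Fintype.card (Fin n) : ℝ≥0) ^ ((1:ℝ≥0∞) / 2).toReal) * K) G ∧
      EqOn F G S := by
  set e := WithLp.equiv 2 (Fin n → ℝ) with he
  have h1 : LipschitzWith 1 (⇑e) := PiLp.lipschitzWith_ofLp 2 (fun _ : Fin n => ℝ)
  have h2 : LipschitzOnWith K (⇑e ∘ F) S := by
    simpa using (h1.comp_lipschitzOnWith hF)
  obtain ⟨g, hg1, hg2⟩ := h2.extend_pi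
  have h3 : LipschitzWith ((Fintype.card (Fin n) : ℝ≥0) ^ ((1:ℝ≥0∞) / 2).toReal) (⇑e.symm) :=
    (PiLp.antilipschitzWith_ofLp 2 (fun _ : Fin n => ℝ)).to_rightInverse e.right_inv
  refine ⟨⇑e.symm ∘ g, h3.comp hg1, fun t ht => ?_⟩
  have := hg2 ht
  simp only [Function.comp_apply] at this ⊢
  rw [← this]
  exact (e.symm_apply_apply (F t)).symm

lemma key {n : ℕ} {Γ : Set (EuclideanSpace ℝ (Fin n))} (hcomp : IsCompact Γ)
    (hconn : IsConnected Γ) (hlen : μH[1] Γ < ⊤)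
    {a b : EuclideanSpace ℝ (Fin n)} (ha : a ∈ Γ) (hb : b ∈ Γ) (hab : a ≠ b) :
    ∃ K0 : ℝ≥0, ∀ ε : ℝ, 0 < ε → ∃ g : ℝ → EuclideanSpace ℝ (Fin n),
      LipschitzWith K0 g ∧ (∀ t : ℝ, ∃ y ∈ Γ, dist (g t) y ≤ ε) ∧
      (∀ x ∈ Γ, ∃ t ∈ Set.Icc (0:ℝ) 1, dist x (g t) ≤ ε) := by
  classical
  set Cn : ℝ≥0 := (Fintype.card (Fin n) : ℝ≥0) ^ ((1:ℝ≥0∞) / 2).toReal with hCn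
  set Hr : ℝ := (μH[1] Γ).toReal with hHrdef
  have hHr : 0 ≤ Hr := ENNReal.toReal_nonneg
  have hd₀ : 0 < dist a b := dist_pos.2 hab
  set d₀ : ℝ := dist a b with hd₀def
  refine ⟨Cn * (12 * Hr).toNNReal, ?_⟩
  intro ε hε
  have hCn0 : (0:ℝ) ≤ Cn := Cn.coe_nonneg
  set δ : ℝ := min (ε / (3 * (Cn : ℝ) + 3)) (d₀ / 4) with hδdef
  have hδpos : 0 < δ := lt_min (by positivity) (by positivity)
  have hδε : 3 * (Cn:ℝ) * δ + δ ≤ ε := by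
    have h1 : δ ≤ ε / (3 * (Cn : ℝ) + 3) := min_le_left _ _
    have h2 : δ * (3 * (Cn:ℝ) + 3) ≤ ε := by
      rw [← le_div_iff₀ (by positivity)]; exact h1
    nlinarith
  have hδd₀ : δ ≤ d₀ / 4 := min_le_right _ _
  have hfar : ∀ x ∈ Γ, ∃ y ∈ Γ, δ/2 ≤ dist x y := by
    intro x hx
    rcases le_or_gt (d₀/2) (dist x a) with h | h
    · exact ⟨a, ha, by linarith⟩
    · refine ⟨b, hb, ?_⟩
      linarith [dist_triangle a x b, dist_comm a x, hd₀def]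
  obtain ⟨N, hNΓ, hNne, hNnet, hNcard⟩ := exists_net hcomp hconn hlen hδpos hfar
  have hgconn : ∀ u ∈ N, ∀ v ∈ N, Relation.ReflTransGen
      (fun p q => p ∈ N ∧ q ∈ N ∧ dist p q ≤ 3 * δ) u v := by
    intro u hu v hv
    have main : ∀ z w : EuclideanSpace ℝ (Fin n),
        Relation.ReflTransGen (fun p q => p ∈ Γ ∧ q ∈ Γ ∧ dist p q < δ) z w →
        ∀ p ∈ N, dist p z ≤ δ → ∀ q ∈ N, dist q w ≤ δ →
        Relation.ReflTransGen (fun p q => p ∈ N ∧ q ∈ N ∧ dist p q ≤ 3*δ) p q := by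
      intro z w h
      induction h with
      | refl =>
        intro p hp h1 q hq h2
        refine Relation.ReflTransGen.single ⟨hp, hq, ?_⟩
        have h3 := dist_triangle p z q
        have h4 : dist z q = dist q z := dist_comm z q
        linarith
      | @tail m w' hzm hmw' ih =>
        intro p hp h1 q hq h2
        obtain ⟨s, hsN, hs⟩ := hNnet m hmw'.1
        have step := ih p hp h1 s hsN (by rw [dist_comm]; exact hs)
        refine step.tail ⟨hsN, hq, ?_⟩
        have h3 := dist_triangle s m w'
        have h4 := dist_triangle (s : EuclideanSpace ℝ (Fin n)) w' q
        have h5 : dist s m = dist m s := dist_comm _ _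
        have h6 : dist w' q = dist q w' := dist_comm _ _
        have h7 : dist m w' < δ := hmw'.2.2
        linarith
    exact main u v (chain_conn hconn.isPreconnected hδpos (hNΓ hu) (hNΓ hv)) u hu
      (by simp [dist_self, hδpos.le]) v hv (by simp [dist_self, hδpos.le])
  obtain ⟨l, hlne, hlN, hNl, hlchain, hllen⟩ := exists_walk N (fun p q => dist p q ≤ 3*δ)
      (fun p q h => (dist_comm q p).trans_le h) hgconn hNne
  set m : ℕ := l.length - 1 with hm
  have hlpos : 0 < l.length := List.length_pos_iff.2 hlne
  have hlen1 : l.length = m + 1 := by omega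
  set v0 := l.head hlne with hv0
  set F : ℝ → EuclideanSpace ℝ (Fin n) := fun t => l.getD (min m ⌊t * m⌋₊) v0 with hF
  set S : Set ℝ := {x : ℝ | ∃ j : ℕ, j ≤ m ∧ x = (j : ℝ) / m} with hS
  -- value of F on grid points
  have hFgrid : ∀ j : ℕ, (hj : j ≤ m) → F ((j:ℝ)/m) = l.get ⟨j, by omega⟩ := by
    intro j hj
    have hidx : min m ⌊((j:ℝ)/m) * m⌋₊ = j := by
      rcases Nat.eq_zero_or_pos m with hm0 | hm0
      · have hj0 : j = 0 := by omega
        subst hj0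
        simp [hm0]
      · have hmne : (m:ℝ) ≠ 0 := Nat.cast_ne_zero.2 (by omega)
        have : ((j:ℝ)/m) * m = (j:ℝ) := by field_simp
        rw [this, Nat.floor_natCast, min_eq_right hj]
    rw [hF]
    simp only [hidx]
    exact List.getD_eq_getElem _ _ (by omega)
  -- Lipschitz bound on grid
  set K₁ : ℝ≥0 := (3 * δ * m).toNNReal with hK₁
  have hK₁coe : (K₁ : ℝ) = 3 * δ * m := Real.coe_toNNReal _ (by positivity)
  have hFlip : LipschitzOnWith K₁ F S := by
    apply LipschitzOnWith.of_dist_le_mul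
    intro x hx y hy
    obtain ⟨i, hi, rfl⟩ := hx
    obtain ⟨j, hj, rfl⟩ := hy
    -- wlog i ≤ j
    have main : ∀ i j : ℕ, i ≤ m → j ≤ m → i ≤ j →
        dist (F ((i:ℝ)/m)) (F ((j:ℝ)/m)) ≤ K₁ * dist ((i:ℝ)/m) ((j:ℝ)/m) := by
      intro i j hi hj hij
      rw [hFgrid i hi, hFgrid j hj]
      have h1 := list_dist_le hlchain i j (by omega) (by omega) hij
      have hji : (0:ℝ) ≤ (j:ℝ) - i := sub_nonneg.2 (Nat.cast_le.2 hij)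
      have h2 : dist ((i:ℝ)/m) ((j:ℝ)/m) = ((j:ℝ) - i) / m := by
        rw [Real.dist_eq, abs_sub_comm, ← sub_div, abs_div, abs_of_nonneg hji,
          abs_of_nonneg (Nat.cast_nonneg m)]
      rw [h2, hK₁coe]
      rcases Nat.eq_zero_or_pos m with hm0 | hm0
      · have hi0 : i = 0 := by omega
        have hj0 : j = 0 := by omega
        subst hi0; subst hj0
        simp
      · have hmne : (m:ℝ) ≠ 0 := Nat.cast_ne_zero.2 (by omega)
        have : 3 * δ * (m:ℝ) * (((j:ℝ) - i) / m) = 3 * δ * ((j:ℝ) - i) := by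
          field_simp
        rw [this]
        exact h1
    rcases le_total i j with h | h
    · exact main i j hi hj h
    · rw [dist_comm, dist_comm ((i:ℝ)/m)]
      exact main j i hj hi h
  obtain ⟨G, hGlip, hGeq⟩ := extend_euclidean F S K₁ hFlip
  set clamp : ℝ → ℝ := fun t => max 0 (min 1 t) with hclampdef
  have hclip : LipschitzWith 1 clamp := (LipschitzWith.id.const_min 1).const_max 0
  have hc0 : ∀ t, 0 ≤ clamp t := fun t => le_max_left _ _
  have hc1 : ∀ t, clamp t ≤ 1 := fun t => max_le zero_le_one (min_le_left _ _)
  have hceq : ∀ t, 0 ≤ t → t ≤ 1 → clamp t = t := by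
    intro t h0 h1
    rw [hclampdef]
    simp only [min_eq_right h1, max_eq_right h0]
  set g : ℝ → EuclideanSpace ℝ (Fin n) := fun t => G (clamp t) with hgdef
  have hK₁le : K₁ ≤ (12 * Hr).toNNReal := by
    apply Real.toNNReal_le_toNNReal
    have hmle : (m:ℝ) ≤ 2 * N.card := by
      have : m ≤ 2 * N.card := le_trans (by omega) hllen
      exact_mod_cast this
    have hNc : (N.card : ℝ) * δ ≤ 2 * Hr := by nlinarith
    nlinarith
  have hglip : LipschitzWith (Cn * (12 * Hr).toNNReal) g := by
    have h1 : LipschitzWith (Cn * K₁ * 1) g := hGlip.comp hclip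
    exact h1.weaken (by rw [mul_one]; exact mul_le_mul_right hK₁le Cn)
  refine ⟨g, hglip, ?_, ?_⟩
  · intro t
    set t' := clamp t with ht'
    set j := ⌊t' * m⌋₊ with hj
    have hjm : j ≤ m := by
      have h1 : t' * m ≤ (m:ℝ) := by nlinarith [hc1 t, hc0 t, Nat.cast_nonneg (α := ℝ) m]
      calc j ≤ ⌊(m:ℝ)⌋₊ := Nat.floor_mono h1
        _ = m := Nat.floor_natCast m
    have hsS : ((j:ℝ)/m) ∈ S := ⟨j, hjm, rfl⟩
    have hjlen : j < l.length := by omega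
    set y := l.get ⟨j, hjlen⟩ with hy
    refine ⟨y, hNΓ (hlN y (l.get_mem _)), ?_⟩
    have e2 : G ((j:ℝ)/m) = y := by rw [← hGeq hsS, hFgrid j hjm]
    have hmd : (m:ℝ) * dist t' ((j:ℝ)/m) ≤ 1 := by
      rcases Nat.eq_zero_or_pos m with hm0 | hm0
      · rw [hm0]; simp
      · have hmpos : (0:ℝ) < m := Nat.cast_pos.2 hm0
        have hfl1 : (j:ℝ) ≤ t' * m := Nat.floor_le (by positivity)
        have hfl2 : t' * m < (j:ℝ) + 1 := Nat.lt_floor_add_one _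
        have hdiv : (j:ℝ)/m ≤ t' := by
          rw [div_le_iff₀ hmpos]; exact hfl1
        have habs : |t' - (j:ℝ)/m| = t' - (j:ℝ)/m := abs_of_nonneg (sub_nonneg.2 hdiv)
        rw [Real.dist_eq, habs]
        have : (m:ℝ) * (t' - (j:ℝ)/m) = t' * m - (j:ℝ) := by field_simp
        linarith [this]
    have hd : dist (g t) y ≤ (Cn : ℝ) * (3 * δ * m) * dist t' ((j:ℝ)/m) := by
      rw [hgdef]
      simp only []
      rw [← e2]
      have := hGlip.dist_le_mul t' ((j:ℝ)/m)
      calc dist (G t') (G ((j:ℝ)/m)) ≤ ((Cn * K₁ : ℝ≥0) : ℝ) * dist t' ((j:ℝ)/m) := this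
        _ = (Cn : ℝ) * (3 * δ * m) * dist t' ((j:ℝ)/m) := by
            rw [NNReal.coe_mul, hK₁coe]
    calc dist (g t) y ≤ (Cn : ℝ) * (3 * δ * m) * dist t' ((j:ℝ)/m) := hd
      _ = 3 * (Cn:ℝ) * δ * ((m:ℝ) * dist t' ((j:ℝ)/m)) := by ring
      _ ≤ 3 * (Cn:ℝ) * δ * 1 := by
          apply mul_le_mul_of_nonneg_left hmd (by positivity)
      _ ≤ ε := by rw [mul_one]; linarith
  · intro x hx
    obtain ⟨v, hvN, hvd⟩ := hNnet x hx
    obtain ⟨⟨i, hi⟩, rfl⟩ := List.mem_iff_get.1 (hNl v hvN)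
    have him : i ≤ m := by omega
    have hi01 : (0:ℝ) ≤ (i:ℝ)/m ∧ (i:ℝ)/m ≤ 1 := by
      constructor
      · positivity
      · rcases Nat.eq_zero_or_pos m with hm0 | hm0
        · have : i = 0 := by omega
          simp [this]
        · rw [div_le_one (by exact_mod_cast Nat.cast_pos.2 hm0)]
          exact_mod_cast him
    refine ⟨(i:ℝ)/m, ⟨hi01.1, hi01.2⟩, ?_⟩
    have hval : g ((i:ℝ)/m) = l.get ⟨i, hi⟩ := by
      rw [hgdef]
      simp only []
      rw [hceq _ hi01.1 hi01.2, ← hGeq ⟨i, him, rfl⟩, hFgrid i him]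
    rw [hval]
    have h9 : 0 ≤ 3 * (Cn:ℝ) * δ := by positivity
    have hδε' : δ ≤ ε := by linarith
    exact hvd.trans hδε'

lemma limit {n : ℕ} {Γ : Set (EuclideanSpace ℝ (Fin n))} (hcomp : IsCompact Γ)
    (hne : Γ.Nonempty) {K0 : ℝ≥0}
    (happ : ∀ ε : ℝ, 0 < ε → ∃ g : ℝ → EuclideanSpace ℝ (Fin n),
      LipschitzWith K0 g ∧ (∀ t : ℝ, ∃ y ∈ Γ, dist (g t) y ≤ ε) ∧
      (∀ x ∈ Γ, ∃ t ∈ Set.Icc (0:ℝ) 1, dist x (g t) ≤ ε)) :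
    ∃ f : ℝ → EuclideanSpace ℝ (Fin n), LipschitzWith K0 f ∧ f '' Set.Icc 0 1 = Γ := by
  classical
  have hpos : ∀ k : ℕ, (0:ℝ) < 1/((k:ℝ)+1) := fun k => by positivity
  choose g hg1 hg2 hg3 using fun k : ℕ => happ (1/((k:ℝ)+1)) (hpos k)
  set U : Ultrafilter ℕ := Ultrafilter.of Filter.atTop with hU
  have hUle : (U : Filter ℕ) ≤ Filter.atTop := Ultrafilter.of_le _
  set Γ' : Set (EuclideanSpace ℝ (Fin n)) := Metric.cthickening 1 Γ with hΓ'
  have hΓ'comp : IsCompact Γ' := hcomp.cthickening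
  have hone : ∀ k : ℕ, 1/((k:ℝ)+1) ≤ 1 := by
    intro k
    rw [div_le_one (by positivity)]
    simp
  have hmem : ∀ (k : ℕ) (t : ℝ), g k t ∈ Γ' := by
    intro k t
    obtain ⟨y, hy, hd⟩ := hg2 k t
    exact Metric.mem_cthickening_of_dist_le _ y 1 Γ hy (hd.trans (hone k))
  have hlim : ∀ t : ℝ, ∃ z, Filter.Tendsto (fun k => g k t) U (nhds z) := by
    intro t
    obtain ⟨z, _, hz2⟩ := hΓ'comp.ultrafilter_le_nhds (U.map (fun k => g k t))
      (le_principal_iff.2 (Filter.mem_map.2 (Filter.univ_mem' (fun k => hmem k t))))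
    exact ⟨z, hz2⟩
  choose f hf using hlim
  have hflip : LipschitzWith K0 f := by
    apply LipschitzWith.of_dist_le_mul
    intro s t
    exact le_of_tendsto ((hf s).dist (hf t))
      (Filter.Eventually.of_forall fun k => (hg1 k).dist_le_mul s t)
  refine ⟨f, hflip, ?_⟩
  have hmemΓ : ∀ t, f t ∈ Γ := by
    intro t
    have h1 : Filter.Tendsto (fun k => Metric.infDist (g k t) Γ) U
        (nhds (Metric.infDist (f t) Γ)) :=
      ((continuous_infDist_pt Γ).continuousAt.tendsto).comp (hf t)
    have h2 : ∀ k : ℕ, Metric.infDist (g k t) Γ ≤ 1/((k:ℝ)+1) := by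
      intro k
      obtain ⟨y, hy, hd⟩ := hg2 k t
      exact (Metric.infDist_le_dist_of_mem hy).trans hd
    have h3 : Filter.Tendsto (fun k : ℕ => 1/((k:ℝ)+1)) U (nhds 0) :=
      tendsto_one_div_add_atTop_nhds_zero_nat.mono_left hUle
    have h4 : Metric.infDist (f t) Γ ≤ 0 :=
      le_of_tendsto_of_tendsto' h1 h3 h2
    have h5 : Metric.infDist (f t) Γ = 0 := le_antisymm h4 Metric.infDist_nonneg
    rwa [← hcomp.isClosed.mem_iff_infDist_zero hne] at h5
  apply Set.Subset.antisymm
  · rintro _ ⟨t, _, rfl⟩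
    exact hmemΓ t
  · intro x hx
    choose t ht hdt using fun k : ℕ => hg3 k x hx
    obtain ⟨t₀, ht₀, htend⟩ := (isCompact_Icc (a := (0:ℝ)) (b := 1)).ultrafilter_le_nhds
      (U.map t)
      (le_principal_iff.2 (Filter.mem_map.2 (Filter.univ_mem' ht)))
    refine ⟨t₀, ht₀, ?_⟩
    have h1 : Filter.Tendsto (fun k => g k t₀) U (nhds (f t₀)) := hf t₀
    have htend' : Filter.Tendsto t (U : Filter ℕ) (nhds t₀) := htend
    have hA : Filter.Tendsto (fun k => dist (f t₀) (g k t₀)) U (nhds 0) := by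
      have h := (tendsto_const_nhds (x := f t₀) (f := (U : Filter ℕ))).dist h1
      simpa using h
    have hB : Filter.Tendsto (fun k => dist t₀ (t k)) U (nhds 0) := by
      have h := (tendsto_const_nhds (x := t₀) (f := (U : Filter ℕ))).dist htend'
      simpa using h
    have hC : Filter.Tendsto (fun k : ℕ => 1/((k:ℝ)+1)) U (nhds 0) :=
      tendsto_one_div_add_atTop_nhds_zero_nat.mono_left hUle
    have hsum : Filter.Tendsto
        (fun k => dist (f t₀) (g k t₀) + (K0:ℝ) * dist t₀ (t k) + 1/((k:ℝ)+1)) U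
        (nhds (0 + (K0:ℝ)*0 + 0)) := (hA.add (hB.const_mul _)).add hC
    have hle : dist (f t₀) x ≤ 0 + (K0:ℝ)*0 + 0 := by
      refine ge_of_tendsto hsum (Filter.Eventually.of_forall (fun k => ?_))
      have e1 := dist_triangle (f t₀) (g k t₀) x
      have e2 := dist_triangle (g k t₀) (g k (t k)) x
      have e3 := (hg1 k).dist_le_mul t₀ (t k)
      have e4 := hdt k
      have e5 : dist x (g k (t k)) = dist (g k (t k)) x := dist_comm _ _
      linarith
    have hz : dist (f t₀) x = 0 := le_antisymm (by simpa using hle) dist_nonneg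
    exact dist_eq_zero.1 hz

theorem stmt_18 (n : ℕ) (Γ : Set (EuclideanSpace ℝ (Fin n)))
    (hcomp : IsCompact Γ) (hconn : IsConnected Γ) (hlen : μH[1] Γ < ⊤) :
    IsPathConnected Γ ∧
    ∃ (f : ℝ → EuclideanSpace ℝ (Fin n)) (K : NNReal),
      LipschitzWith K f ∧ f '' Set.Icc 0 1 = Γ := by
  have hne : Γ.Nonempty := hconn.nonempty
  by_cases hsub : ∃ x, Γ = {x}
  · obtain ⟨x, rfl⟩ := hsub
    constructor
    · exact isPathConnected_singleton x
    · refine ⟨fun _ => x, 0, LipschitzWith.const' x, ?_⟩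
      exact Set.Nonempty.image_const (Set.nonempty_Icc.2 zero_le_one) x
  · have h2 : ∃ a ∈ Γ, ∃ b ∈ Γ, a ≠ b := by
      obtain ⟨x, hx⟩ := hne
      by_contra h
      push_neg at h
      refine hsub ⟨x, Set.eq_singleton_iff_unique_mem.2 ⟨hx, fun y hy => h y hy x hx⟩⟩
    obtain ⟨a, ha, b, hb, hab⟩ := h2
    obtain ⟨K0, happ⟩ := key hcomp hconn hlen ha hb hab
    obtain ⟨f, hf1, hf2⟩ := limit hcomp hne happ
    refine ⟨?_, f, K0, hf1, hf2⟩
    rw [← hf2]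
    exact ((convex_Icc (0:ℝ) 1).isPathConnected (Set.nonempty_Icc.2 zero_le_one)).image
      hf1.continuous
end
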